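/- Let n ≥ 0 be an integer and let H be a homogeneous polynomial of degree n in two real variables with complex coefficients that is harmonic (ΔH = 0). Let q⁺ and q⁻ be homogeneous polynomials of degree n+2 in two real variables with complex coefficients such that: Δq⁺ = H at every point of the open sector Σ_R^+ and Δq⁻ = H at every point of the open sector Σ_R^−; q⁺(0,t) = q⁻(0,t) and ∂q⁺/∂x₁(0,t) = ∂q⁻/∂x₁(0,t) for all t ∈ [0,R]; q⁺(s,0) = 0 and ∂q⁺/∂x₂(s,0) = 0 for all s ∈ [−R,0]; q⁻(s,0) = 0 and ∂q⁻/∂x₂(s,0) = 0 for all s ∈ [0,R]. Then q⁺ = q⁻ as polynomials. -/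

import Mathlib

open MvPolynomial Set

/-- The Laplacian ∂²/∂x₁² + ∂²/∂x₂² on polynomials in two variables. -/
noncomputable def lapP (q : MvPolynomial (Fin 2) ℂ) : MvPolynomial (Fin 2) ℂ :=
  pderiv 0 (pderiv 0 q) + pderiv 1 (pderiv 1 q)

/-- Evaluation of a two-variable complex polynomial at a real point. -/
noncomputable def evalAt (q : MvPolynomial (Fin 2) ℂ) (x y : ℝ) : ℂ :=
  eval ![(x : ℂ), (y : ℂ)] q

/-- The open quarter sector `Σ_R^+` (second quadrant part of the upper half disk). -/
def sectorPlus (R : ℝ) : Set (ℝ × ℝ) :=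
  {p | p.1 < 0 ∧ 0 < p.2 ∧ p.1 ^ 2 + p.2 ^ 2 < R ^ 2}

/-- The open quarter sector `Σ_R^−` (first quadrant part of the upper half disk). -/
def sectorMinus (R : ℝ) : Set (ℝ × ℝ) :=
  {p | 0 < p.1 ∧ 0 < p.2 ∧ p.1 ^ 2 + p.2 ^ 2 < R ^ 2}

/-! ### Auxiliary lemmas -/

/-- Transfer map to iterated univariate polynomials. -/
noncomputable def phi2 : MvPolynomial (Fin 2) ℂ →ₐ[ℂ] Polynomial (Polynomial ℂ) :=
  MvPolynomial.aeval ![Polynomial.C Polynomial.X, Polynomial.X]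

lemma eval_phi2 (p : MvPolynomial (Fin 2) ℂ) (x y : ℂ) :
    eval ![x, y] p = ((phi2 p).map (Polynomial.evalRingHom x)).eval y := by
  induction p using MvPolynomial.induction_on with
  | C a => simp [phi2]
  | add p q hp hq => simp [hp, hq]
  | mul_X p i hp => fin_cases i <;> simp [hp, phi2]

lemma infinite_coe (S : Set ℝ) (hS : S.Infinite) :
    ((fun t : ℝ => (t : ℂ)) '' S).Infinite :=
  hS.image (Set.injOn_of_injective Complex.ofReal_injective)

/-- A complex 2-variable polynomial vanishing on a real box is zero. -/
lemma vanish_box {p : MvPolynomial (Fin 2) ℂ} {a b c d : ℝ} (hab : a < b) (hcd : c < d)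
    (h : ∀ x ∈ Ioo a b, ∀ y ∈ Ioo c d, eval ![(x : ℂ), (y : ℂ)] p = 0) : p = 0 := by
  have hphi : phi2 p = 0 := by
    have hx : ∀ x ∈ Ioo a b, (phi2 p).map (Polynomial.evalRingHom (x : ℂ)) = 0 := by
      intro x hx
      apply Polynomial.eq_zero_of_infinite_isRoot
      apply Set.Infinite.mono (s := (fun t : ℝ => (t : ℂ)) '' Ioo c d)
      · rintro - ⟨y, hy, rfl⟩
        simpa [Polynomial.IsRoot, ← eval_phi2] using h x hx y hy
      · exact infinite_coe _ (Set.Ioo_infinite hcd)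
    ext k
    have h1 : ∀ x ∈ Ioo a b, Polynomial.eval (x : ℂ) ((phi2 p).coeff k) = 0 := by
      intro x hxm
      have h2 := congrArg (fun q => Polynomial.coeff q k) (hx x hxm)
      simpa [Polynomial.coeff_map] using h2
    have h3 : (phi2 p).coeff k = 0 := by
      apply Polynomial.eq_zero_of_infinite_isRoot
      apply Set.Infinite.mono (s := (fun t : ℝ => (t : ℂ)) '' Ioo a b)
      · rintro - ⟨x, hxm, rfl⟩; exact h1 x hxm
      · exact infinite_coe _ (Set.Ioo_infinite hab)
    simp [h3]
  apply MvPolynomial.funext (q := 0)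
  intro v
  have hv : v = ![v 0, v 1] := by funext i; fin_cases i <;> simp
  rw [hv, eval_phi2, hphi]
  simp

lemma coeff_pderiv' (i : Fin 2) (p : MvPolynomial (Fin 2) ℂ) (μ : Fin 2 →₀ ℕ) :
    coeff μ (pderiv i p) = ((μ i : ℕ) + 1 : ℂ) * coeff (μ + Finsupp.single i 1) p := by
  induction p using MvPolynomial.induction_on' with
  | add p q hp hq => simp [hp, hq, mul_add]
  | monomial s a =>
    rw [pderiv_monomial]
    simp only [coeff_monomial]
    by_cases hs : s = μ + Finsupp.single i 1
    · subst hs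
      have h1 : μ + Finsupp.single i 1 - Finsupp.single i 1 = μ := by
        ext j; by_cases hj : j = i <;> simp [Finsupp.single_apply, hj]
      have h2 : (μ + Finsupp.single i 1 : Fin 2 →₀ ℕ) i = μ i + 1 := by
        rw [Finsupp.add_apply, Finsupp.single_eq_same]
      rw [if_pos h1, h2, if_pos rfl]
      push_cast; ring
    · rw [if_neg hs]
      by_cases hz : s i = 0
      · by_cases he : s - Finsupp.single i 1 = μ
        · rw [if_pos he]; simp [hz]
        · rw [if_neg he]; simp
      · have he : s - Finsupp.single i 1 ≠ μ := by
          intro h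
          apply hs
          ext j
          have hj' := DFunLike.congr_fun h j
          by_cases hj : j = i
          · subst hj
            simp [Finsupp.single_apply] at hj' ⊢
            omega
          · have hij : ¬ i = j := fun h => hj h.symm
            simp [Finsupp.single_apply, hij] at hj' ⊢
            omega
        rw [if_neg he]; simp

lemma degree_fin2 (μ : Fin 2 →₀ ℕ) : μ.degree = μ 0 + μ 1 := by
  have h : μ.degree = ∑ i : Fin 2, μ i := by
    rw [Finsupp.degree]
    apply Finset.sum_subset (Finset.subset_univ _)
    intro i _ hi
    simpa using Finsupp.notMem_support_iff.mp hi
  rw [h, Fin.sum_univ_two]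

lemma homog_deg {p : MvPolynomial (Fin 2) ℂ} {m : ℕ} (hp : p.IsHomogeneous m)
    {μ : Fin 2 →₀ ℕ} (hμ : coeff μ p ≠ 0) : μ 0 + μ 1 = m := by
  have h := hp hμ
  rw [← degree_fin2]
  rwa [show (Finsupp.weight 1 : (Fin 2 →₀ ℕ) →+ ℕ) = Finsupp.degree from
    (Finsupp.degree_eq_weight_one).symm] at h

lemma fin2_decomp (μ : Fin 2 →₀ ℕ) :
    μ = Finsupp.single 0 (μ 0) + Finsupp.single 1 (μ 1) := by
  ext j
  fin_cases j <;> simp [Finsupp.single_apply]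

lemma eval_zero_left {p : MvPolynomial (Fin 2) ℂ} {m : ℕ} (hp : p.IsHomogeneous m) (z : ℂ) :
    eval ![0, z] p = coeff (Finsupp.single 1 m) p * z ^ m := by
  rw [MvPolynomial.eval_eq]
  rw [Finset.sum_eq_single (Finsupp.single 1 m)]
  · simp [Fin.prod_univ_two, Finsupp.single_apply]
    intro h
    simp [h]
  · intro μ hμs hne
    have hc : coeff μ p ≠ 0 := MvPolynomial.mem_support_iff.mp hμs
    have hdeg := homog_deg hp hc
    by_cases h0 : μ 0 = 0
    · exfalso
      apply hne
      rw [fin2_decomp μ, h0]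
      simp
      congr 1
      omega
    · apply mul_eq_zero_of_right
      apply Finset.prod_eq_zero (Finsupp.mem_support_iff.mpr h0)
      simp [zero_pow h0]
  · intro h
    simp [MvPolynomial.notMem_support_iff.mp h]

lemma pderiv_homog {p : MvPolynomial (Fin 2) ℂ} {m : ℕ} (hp : p.IsHomogeneous (m + 1))
    (i : Fin 2) : (pderiv i p).IsHomogeneous m := by
  intro μ hμ
  rw [coeff_pderiv'] at hμ
  have hc : coeff (μ + Finsupp.single i 1) p ≠ 0 := by
    intro h; simp [h] at hμ
  have hd := homog_deg hp hc
  show (Finsupp.weight 1) μ = m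
  rw [show (Finsupp.weight 1 : (Fin 2 →₀ ℕ) →+ ℕ) = Finsupp.degree from
    (Finsupp.degree_eq_weight_one).symm, degree_fin2]
  fin_cases i <;> simp [Finsupp.add_apply, Finsupp.single_apply] at hd ⊢ <;> omega

theorem stmt_6 (R : ℝ) (hR : 0 < R) (n : ℕ)
    (H qp qm : MvPolynomial (Fin 2) ℂ)
    (hHhom : H.IsHomogeneous n) (hHharm : lapP H = 0)
    (hqp : qp.IsHomogeneous (n + 2)) (hqm : qm.IsHomogeneous (n + 2))
    (hΔp : ∀ p ∈ sectorPlus R, evalAt (lapP qp) p.1 p.2 = evalAt H p.1 p.2)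
    (hΔm : ∀ p ∈ sectorMinus R, evalAt (lapP qm) p.1 p.2 = evalAt H p.1 p.2)
    (htrans : ∀ t ∈ Set.Icc (0 : ℝ) R,
      evalAt qp 0 t = evalAt qm 0 t ∧
      evalAt (pderiv 0 qp) 0 t = evalAt (pderiv 0 qm) 0 t)
    (hbp : ∀ s ∈ Set.Icc (-R) (0 : ℝ),
      evalAt qp s 0 = 0 ∧ evalAt (pderiv 1 qp) s 0 = 0)
    (hbm : ∀ s ∈ Set.Icc (0 : ℝ) R,
      evalAt qm s 0 = 0 ∧ evalAt (pderiv 1 qm) s 0 = 0) :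
    qp = qm := by
  set d := qp - qm with hd_def
  have hd : d.IsHomogeneous (n + 2) := hqp.sub hqm
  -- Step A: the Laplacians agree with H as polynomials
  have hp1 : lapP qp = H := by
    rw [← sub_eq_zero]
    apply vanish_box (a := -(R/2)) (b := -(R/4)) (c := R/4) (d := R/2)
      (by linarith) (by linarith)
    intro x hx y hy
    have hmem : ((x, y) : ℝ × ℝ) ∈ sectorPlus R := by
      refine ⟨by simp only; linarith [hx.2], by simp only; linarith [hy.1], ?_⟩
      simp only
      nlinarith [hx.1, hx.2, hy.1, hy.2]
    have h := hΔp (x, y) hmem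
    simp only [evalAt] at h
    simp [map_sub, h]
  have hm1 : lapP qm = H := by
    rw [← sub_eq_zero]
    apply vanish_box (a := R/4) (b := R/2) (c := R/4) (d := R/2)
      (by linarith) (by linarith)
    intro x hx y hy
    have hmem : ((x, y) : ℝ × ℝ) ∈ sectorMinus R := by
      refine ⟨by simp only; linarith [hx.1], by simp only; linarith [hy.1], ?_⟩
      simp only
      nlinarith [hx.1, hx.2, hy.1, hy.2]
    have h := hΔm (x, y) hmem
    simp only [evalAt] at h
    simp [map_sub, h]
  have hlap : lapP d = 0 := by
    have h : lapP d = lapP qp - lapP qm := by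
      simp only [lapP, hd_def, map_sub]
      abel
    rw [h, hp1, hm1, sub_self]
  have hRmem : R ∈ Set.Icc (0 : ℝ) R := ⟨le_of_lt hR, le_refl R⟩
  have hRC : ((R : ℂ)) ≠ 0 := by exact_mod_cast hR.ne'
  -- base case 0
  have c0 : coeff (Finsupp.single 0 0 + Finsupp.single 1 (n + 2 - 0)) d = 0 := by
    have h0 : eval ![(0 : ℂ), (R : ℂ)] d = 0 := by
      have h := (htrans R hRmem).1
      simp only [evalAt, Complex.ofReal_zero] at h
      simp [hd_def, map_sub, h]
    have h1 := eval_zero_left hd (R : ℂ)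
    rw [h0] at h1
    have h2 : coeff (Finsupp.single 1 (n + 2)) d = 0 := by
      rcases mul_eq_zero.mp h1.symm with h | h
      · exact h
      · exact absurd h (pow_ne_zero _ hRC)
    simpa using h2
  -- base case 1
  have c1 : coeff (Finsupp.single 0 1 + Finsupp.single 1 (n + 2 - 1)) d = 0 := by
    have he : (pderiv 0 d).IsHomogeneous (n + 1) := pderiv_homog hd 0
    have h0 : eval ![(0 : ℂ), (R : ℂ)] (pderiv 0 d) = 0 := by
      have h := (htrans R hRmem).2
      simp only [evalAt, Complex.ofReal_zero] at h
      simp [hd_def, map_sub, h]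
    have h1 := eval_zero_left he (R : ℂ)
    rw [h0] at h1
    have h2 : coeff (Finsupp.single 1 (n + 1)) (pderiv 0 d) = 0 := by
      rcases mul_eq_zero.mp h1.symm with h | h
      · exact h
      · exact absurd h (pow_ne_zero _ hRC)
    rw [coeff_pderiv'] at h2
    have h3 : coeff (Finsupp.single 1 (n + 1) + Finsupp.single 0 1) d = 0 := by
      have hne : ((Finsupp.single (1 : Fin 2) (n + 1)) 0 + 1 : ℂ) ≠ 0 := by
        simp [Finsupp.single_apply]
      exact (mul_eq_zero.mp h2).resolve_left hne
    rw [add_comm] at h3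
    exact h3
  -- recurrence
  have hrec : ∀ k, coeff (Finsupp.single 0 k + Finsupp.single 1 (n + 2 - k)) d = 0 →
      coeff (Finsupp.single 0 (k + 2) + Finsupp.single 1 (n + 2 - (k + 2))) d = 0 := by
    intro k hk
    by_cases hkm : k + 2 ≤ n + 2
    · set μ : Fin 2 →₀ ℕ := Finsupp.single 0 k + Finsupp.single 1 (n - k) with hμ_def
      have hco : coeff μ (lapP d) = 0 := by rw [hlap, coeff_zero]
      rw [lapP, coeff_add] at hco
      rw [coeff_pderiv', coeff_pderiv', coeff_pderiv', coeff_pderiv'] at hco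
      have E1 : μ + Finsupp.single 0 1 + Finsupp.single 0 1 =
          Finsupp.single 0 (k + 2) + Finsupp.single 1 (n + 2 - (k + 2)) := by
        ext j; fin_cases j <;> simp [hμ_def, Finsupp.single_apply] <;> omega
      have E2 : μ + Finsupp.single 1 1 + Finsupp.single 1 1 =
          Finsupp.single 0 k + Finsupp.single 1 (n + 2 - k) := by
        ext j; fin_cases j <;> simp [hμ_def, Finsupp.single_apply] <;> omega
      rw [E1, E2, hk, mul_zero, mul_zero, add_zero] at hco
      have hne : ((μ 0 : ℕ) + 1 : ℂ) ≠ 0 := Nat.cast_add_one_ne_zero (μ 0)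
      have hne2 : (((μ + Finsupp.single 0 1 : Fin 2 →₀ ℕ) 0 : ℕ) + 1 : ℂ) ≠ 0 :=
        Nat.cast_add_one_ne_zero _
      rcases mul_eq_zero.mp hco with h | h
      · exact absurd h hne
      rcases mul_eq_zero.mp h with h' | h'
      · exact absurd h' hne2
      · exact h'
    · apply hd.coeff_eq_zero
      rw [degree_fin2]
      simp [Finsupp.single_apply]
      omega
  -- all coefficients vanish
  have key : ∀ k, coeff (Finsupp.single 0 k + Finsupp.single 1 (n + 2 - k)) d = 0 ∧
      coeff (Finsupp.single 0 (k + 1) + Finsupp.single 1 (n + 2 - (k + 1))) d = 0 := by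
    intro k
    induction k with
    | zero => exact ⟨c0, c1⟩
    | succ k ih => exact ⟨ih.2, hrec k ih.1⟩
  have hzero : d = 0 := by
    ext μ
    rw [coeff_zero]
    by_cases hdeg : μ.degree = n + 2
    · have h01 : μ 0 + μ 1 = n + 2 := by rw [← degree_fin2]; exact hdeg
      have hμeq : μ = Finsupp.single 0 (μ 0) + Finsupp.single 1 (n + 2 - μ 0) := by
        have h2 : n + 2 - μ 0 = μ 1 := by omega
        rw [h2]
        exact fin2_decomp μ
      rw [hμeq]
      exact (key (μ 0)).1
    · exact hd.coeff_eq_zero hdeg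
  exact sub_eq_zero.mp hzero
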